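/- arXiv:2003.13310 — 2 statements merged into one kernel-verified Lean document; each statement's English description precedes it below -/
import Mathlib

section
/- Suppose the reference channel $Z^*$ has positive distance from the lateral boundary of the cell $Z$. Then the averaging operator $\mathcal{U}_\epsilon$ maps $L^2((0,T)\times\Sigma,H^1(Z^*))$ into $L^2((0,T),H^1(\Omega^M_{*,\epsilon}))$, and for every $\phi\in L^2((0,T)\times\Sigma,H^1(Z^*))$ it holds that $\epsilon\nabla\,\mathcal{U}_\epsilon(\phi)=\mathcal{U}_\epsilon(\nabla_y\phi)$. -/
open MeasureTheory Set ENNReal Filter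

noncomputable section

abbrev Em (m : ℕ) : Type := (Fin m → ℝ) × ℝ

/-- The reference base cell `Y = (0,1)^{n-1}`. -/
def cellY (m : ℕ) : Set (Fin m → ℝ) := Set.pi Set.univ fun _ => Ioo (0:ℝ) 1

/-- The reference cell `Z = Y × (-1,1)`. -/
def cellZ (m : ℕ) : Set (Em m) := (cellY m) ×ˢ (Ioo (-1:ℝ) 1)

/-- The map `y ↦ ε (y + (k̄, 0))`. -/
def cellMap {m : ℕ} (ε : ℝ) (k : Fin m → ℤ) (y : Em m) : Em m :=
  (fun i => ε * (y.1 i + (k i : ℝ)), ε * y.2)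

/-- Indices of cells completely contained in the layer `Σ × (-ε,ε)`. -/
def cellIdx {m : ℕ} (ε : ℝ) (Sig : Set (Fin m → ℝ)) : Set (Fin m → ℤ) :=
  {k | cellMap ε k '' (cellZ m) ⊆ Sig ×ˢ (Ioo (-ε) ε)}

/-- The channel array `Ω^M_{*,ε}`. -/
def channelArray {m : ℕ} (ε : ℝ) (Sig : Set (Fin m → ℝ)) (Zs : Set (Em m)) : Set (Em m) :=
  ⋃ k ∈ cellIdx ε Sig, cellMap ε k '' Zs

/-- Top face `S_*^+` of the reference channel. -/
def SplusF {m : ℕ} (Zs : Set (Em m)) : Set (Em m) := {y | y ∈ frontier Zs ∧ y.2 = 1}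
/-- Bottom face `S_*^-` of the reference channel. -/
def SminusF {m : ℕ} (Zs : Set (Em m)) : Set (Em m) := {y | y ∈ frontier Zs ∧ y.2 = -1}
/-- Lateral boundary `N` of the reference channel. -/
def latBd {m : ℕ} (Zs : Set (Em m)) : Set (Em m) :=
  frontier Zs \ (SplusF Zs ∪ SminusF Zs)

/-- The union `N_ε` of the lateral boundaries of the channels. -/
def latArray {m : ℕ} (ε : ℝ) (Sig : Set (Fin m → ℝ)) (Zs : Set (Em m)) : Set (Em m) :=
  ⋃ k ∈ cellIdx ε Sig, cellMap ε k '' (latBd Zs)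

/-- Union of the top/bottom interfaces `S^±_{*,ε}`. -/
def topBotArray {m : ℕ} (ε : ℝ) (Sig : Set (Fin m → ℝ)) (Zs : Set (Em m)) : Set (Em m) :=
  ⋃ k ∈ cellIdx ε Sig, cellMap ε k '' (SplusF Zs ∪ SminusF Zs)

/-- `ε > 0` and `ε⁻¹ ∈ ℕ`. -/
def admissibleEps (ε : ℝ) : Prop := 0 < ε ∧ ∃ j : ℕ, 0 < j ∧ ε * j = 1

/-- Euclidean dot product of two (continuous linear) functionals on `Em m`,
identified with their gradient vectors. -/
def dotCLM {m : ℕ} (f g : Em m →L[ℝ] ℝ) : ℝ :=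
  (∑ i : Fin m, f (Pi.single i 1, 0) * g (Pi.single i 1, 0)) + f (0, 1) * g (0, 1)

/-- Euclidean dot product on `Em m`. -/
def dotEm {m : ℕ} (a b : Em m) : ℝ := (∑ i : Fin m, a.1 i * b.1 i) + a.2 * b.2

/-- Componentwise floor of `x̄/ε`. -/
def floorVec {m : ℕ} (ε : ℝ) (x : Fin m → ℝ) : Fin m → ℤ := fun i => ⌊x i / ε⌋

/-- The unfolding operator for thin channels:
`(𝒯_ε v)(t, x̄, y) = v (t, ε([x̄/ε],0) + ε y)`. -/
def unfoldOp {m : ℕ} (ε : ℝ) (v : ℝ × Em m → ℝ) : ℝ × ((Fin m → ℝ) × Em m) → ℝ :=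
  fun p => v (p.1, cellMap ε (floorVec ε p.2.1) p.2.2)

/-- `x ↦ x/ε`. -/
def scaleInv {m : ℕ} (ε : ℝ) (x : Em m) : Em m := (fun i => x.1 i / ε, x.2 / ε)

/-- The explicit averaging formula
`𝒰_ε(φ)(t,x) = ∫_Y φ(t, ε(z̄+[x̄/ε]), ({x̄/ε}, xₙ/ε)) dz̄`. -/
def avgOp (m : ℕ) (ε : ℝ) (φ : ℝ × ((Fin m → ℝ) × Em m) → ℝ) : ℝ × Em m → ℝ :=
  fun x => ∫ zb in cellY m,
    φ (x.1, ((fun i => ε * (zb i + (⌊x.2.1 i / ε⌋ : ℤ))),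
             ((fun i => Int.fract (x.2.1 i / ε)), x.2.2 / ε)))


namespace AvgAux
variable {m : ℕ}
def eb (m : ℕ) (i : Fin m) : Em m := ((Pi.single i 1 : Fin m → ℝ), (0:ℝ))
def en (m : ℕ) : Em m := ((0 : Fin m → ℝ), (1:ℝ))
def Pb (m : ℕ) (i : Fin m) : Em m →L[ℝ] ℝ :=
  (ContinuousLinearMap.proj i).comp (ContinuousLinearMap.fst ℝ (Fin m → ℝ) ℝ)
def Pn (m : ℕ) : Em m →L[ℝ] ℝ := ContinuousLinearMap.snd ℝ (Fin m → ℝ) ℝ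
lemma clm_decomp (f : Em m →L[ℝ] ℝ) :
    f = (∑ i : Fin m, f (eb m i) • Pb m i) + f (en m) • Pn m := by
  refine ContinuousLinearMap.ext fun w => ?_
  have hw : w = (∑ i : Fin m, w.1 i • eb m i) + w.2 • en m := by
    refine Prod.ext ?_ ?_
    · funext j
      simp [eb, en, Prod.fst_sum, Finset.sum_apply, Pi.single_apply]
    · simp [eb, en, Prod.snd_sum]
  conv_lhs => rw [hw]
  simp only [map_add, map_sum, _root_.map_smul, ContinuousLinearMap.add_apply,
    ContinuousLinearMap.sum_apply, ContinuousLinearMap.smul_apply, Pb, Pn,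
    ContinuousLinearMap.coe_comp', Function.comp_apply, ContinuousLinearMap.coe_fst',
    ContinuousLinearMap.proj_apply, ContinuousLinearMap.coe_snd', smul_eq_mul]
  congr 1
  · exact Finset.sum_congr rfl fun i _ => by ring
  · ring
lemma stronglyMeasurable_fderiv_param
    (ψ : (Fin m → ℝ) → Em m → ℝ) (y : Em m)
    (hcont : Continuous fun p : (Fin m → ℝ) × Em m => ψ p.1 p.2)
    (hdiff : ∀ a, DifferentiableAt ℝ (ψ a) y) :
    StronglyMeasurable fun a => fderiv ℝ (ψ a) y := by
  have key : ∀ v : Em m, Measurable fun a => fderiv ℝ (ψ a) y v := by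
    intro v
    have hc : Tendsto (fun n : ℕ => ‖(n : ℝ)‖) atTop atTop := by
      simp only [Real.norm_natCast]
      exact tendsto_natCast_atTop_atTop
    refine measurable_of_tendsto_metrizable
      (f := fun (n : ℕ) (a : Fin m → ℝ) =>
        (n : ℝ) • (ψ a (y + ((n : ℝ))⁻¹ • v) - ψ a y)) (fun n => ?_) ?_
    · exact ((continuous_const (y := (n : ℝ))).smul
        ((hcont.comp (continuous_id.prodMk continuous_const)).sub
          (hcont.comp (continuous_id.prodMk continuous_const)))).measurable
    · rw [tendsto_pi_nhds]
      intro a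
      exact (hdiff a).hasFDerivAt.lim v hc
  have hrw : (fun a => fderiv ℝ (ψ a) y)
      = fun a => (∑ i : Fin m, (fderiv ℝ (ψ a) y (eb m i)) • Pb m i)
          + (fderiv ℝ (ψ a) y (en m)) • Pn m := funext fun a => clm_decomp _
  rw [hrw]
  refine StronglyMeasurable.add ?_ ?_
  · refine Finset.stronglyMeasurable_fun_sum _ fun i _ => ?_
    exact ((key (eb m i)).stronglyMeasurable).smul_const _
  · exact ((key (en m)).stronglyMeasurable).smul_const _
end AvgAux

open AvgAux in
/-- the averaging operator maps `L²((0,T)×Σ,H¹(Z^*))` into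
`L²((0,T),H¹(Ω^M_{*,ε}))` and `ε ∇ 𝒰_ε(φ) = 𝒰_ε(∇_y φ)`: provided the reference
channel `Z^*` has positive distance to the lateral boundary of `Z`, at every point
`x = cellMap ε k y` of a channel cell the averaged function is differentiable and its
scaled gradient is the average of the `y`-gradient of `φ`. -/
theorem averaging_operator_gradient
    (m : ℕ) (T ε : ℝ) (hT : 0 < T) (hε : admissibleEps ε)
    (Sig : Set (Fin m → ℝ)) (hSigOpen : IsOpen Sig) (hSigBdd : Bornology.IsBounded Sig)
    (Zs : Set (Em m)) (hZsOpen : IsOpen Zs) (hZsSub : Zs ⊆ cellZ m)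
    (hdist : ∃ d > (0:ℝ), ∀ y ∈ latBd Zs, ∀ z ∈ latBd (cellZ m), d ≤ dist y z)
    (φ : ℝ × ((Fin m → ℝ) × Em m) → ℝ)
    (hφcont : Continuous φ)
    (hφdiff : ∀ (t : ℝ) (xb : Fin m → ℝ), ∀ y ∈ Zs,
      DifferentiableAt ℝ (fun y' => φ (t, xb, y')) y)
    (M : ℝ)
    (hφbd : ∀ (t : ℝ) (xb : Fin m → ℝ) (y wv : Em m),
      ‖fderiv ℝ (fun y' => φ (t, xb, y')) y wv‖ ≤ M * ‖wv‖) :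
    ∀ t : ℝ, ∀ k ∈ cellIdx ε Sig, ∀ y ∈ Zs,
      DifferentiableAt ℝ (fun x => avgOp m ε φ (t, x)) (cellMap ε k y) ∧
      MemLp (fun x => avgOp m ε φ (t, x)) 2 (volume.restrict (channelArray ε Sig Zs)) ∧
      ∀ wv : Em m,
        ε * fderiv ℝ (fun x => avgOp m ε φ (t, x)) (cellMap ε k y) wv
          = ∫ zb in cellY m,
              fderiv ℝ (fun y' => φ (t, (fun i => ε * (zb i + (k i : ℝ))), y')) y wv := by
  obtain ⟨hε0, -⟩ := hε
  have hεne : ε ≠ 0 := ne_of_gt hε0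
  -- image of a set under `cellMap ε k` as a preimage
  have himg : ∀ (kv : Fin m → ℤ) (S : Set (Em m)), cellMap ε kv '' S
      = (fun x : Em m => ((fun i => x.1 i / ε - (kv i : ℝ)), x.2 / ε)) ⁻¹' S := by
    intro kv S
    ext x
    constructor
    · rintro ⟨w, hw, rfl⟩
      have hwe : (((fun i => (cellMap ε kv w).1 i / ε - (kv i : ℝ)) : Fin m → ℝ),
          (cellMap ε kv w).2 / ε) = w := by
        refine Prod.ext (funext fun i => ?_) ?_
        · simp only [cellMap]
          field_simp
          ring
        · simp only [cellMap]
          field_simp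
      simpa [Set.mem_preimage, hwe] using hw
    · intro hx
      refine ⟨(((fun i => x.1 i / ε - (kv i : ℝ)) : Fin m → ℝ), x.2 / ε), hx, ?_⟩
      refine Prod.ext (funext fun i => ?_) ?_
      · simp only [cellMap]
        field_simp
        ring
      · simp only [cellMap]
        field_simp
  have hAcont : ∀ kv : Fin m → ℤ,
      Continuous (fun x : Em m => (((fun i => x.1 i / ε - (kv i : ℝ)) : Fin m → ℝ), x.2 / ε)) := by
    intro kv
    refine Continuous.prodMk (continuous_pi fun i => ?_) (by fun_prop)
    fun_prop
  -- openness of the channel array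
  have hArrOpen : IsOpen (channelArray ε Sig Zs) := by
    refine isOpen_iUnion fun kv => isOpen_iUnion fun _ => ?_
    rw [himg]
    exact hZsOpen.preimage (hAcont kv)
  -- basic measure facts about the reference cell
  have hcellYm : MeasurableSet (cellY m) := MeasurableSet.univ_pi fun _ => measurableSet_Ioo
  have hcellYvol : volume (cellY m) < ⊤ := by
    refine lt_of_le_of_lt (measure_mono (fun x hx => ?_))
      (?_ : volume (Set.pi Set.univ fun _ : Fin m => Icc (0:ℝ) 1) < ⊤)
    · exact fun i _ => Ioo_subset_Icc_self (hx i (Set.mem_univ i))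
    · rw [volume_pi_pi]
      simp [Real.volume_Icc]
  haveI : IsFiniteMeasure (volume.restrict (cellY m)) :=
    ⟨by rwa [Measure.restrict_apply_univ]⟩
  intro t
  -- Part 1 : square integrability on the channel array
  have hmem : MemLp (fun x => avgOp m ε φ (t, x)) 2
      (volume.restrict (channelArray ε Sig Zs)) := by
    -- strong measurability of the averaged function
    have hmeasAvg : StronglyMeasurable (fun x : Em m => avgOp m ε φ (t, x)) := by
      have hq : ∀ i : Fin m, Measurable fun p : Em m × (Fin m → ℝ) => p.1.1 i / ε :=
        fun i => by fun_prop
      have hmeasArg : Measurable (fun p : Em m × (Fin m → ℝ) =>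
          ((t, ((fun i => ε * (p.2 i + ((⌊p.1.1 i / ε⌋ : ℤ) : ℝ))),
            ((fun i => Int.fract (p.1.1 i / ε)), p.1.2 / ε))) :
            ℝ × ((Fin m → ℝ) × Em m))) := by
        refine measurable_const.prodMk (Measurable.prodMk ?_ (Measurable.prodMk ?_ ?_))
        · refine measurable_pi_lambda _ fun i => ?_
          have hfloor : Measurable fun p : Em m × (Fin m → ℝ) =>
              ((⌊p.1.1 i / ε⌋ : ℤ) : ℝ) := by
            have : (fun p : Em m × (Fin m → ℝ) => ((⌊p.1.1 i / ε⌋ : ℤ) : ℝ))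
                = fun p => p.1.1 i / ε - Int.fract (p.1.1 i / ε) := by
              funext p
              rw [Int.self_sub_fract]
            rw [this]
            exact (hq i).sub (hq i).fract
          exact (((measurable_pi_apply i).comp measurable_snd).add hfloor).const_mul ε
        · exact measurable_pi_lambda _ fun i => (hq i).fract
        · exact (measurable_snd.comp measurable_fst).div_const ε
      exact ((hφcont.measurable.comp hmeasArg).stronglyMeasurable).integral_prod_right'
    -- a uniform bound on the channel array
    obtain ⟨R, hR⟩ := hSigBdd.subset_closedBall 0
    have hK2c : IsCompact ((Set.pi Set.univ fun _ : Fin m => Icc (0:ℝ) 1) ×ˢ Icc (-1:ℝ) 1) :=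
      (isCompact_univ_pi fun _ => isCompact_Icc).prod isCompact_Icc
    have hKc : IsCompact (({t} : Set ℝ) ×ˢ ((Metric.closedBall (0 : Fin m → ℝ) R) ×ˢ
        ((Set.pi Set.univ fun _ : Fin m => Icc (0:ℝ) 1) ×ˢ Icc (-1:ℝ) 1))) :=
      isCompact_singleton.prod ((isCompact_closedBall _ _).prod hK2c)
    obtain ⟨C, hC⟩ := hKc.exists_bound_of_continuousOn hφcont.continuousOn
    have hbd : ∀ x ∈ channelArray ε Sig Zs,
        ‖avgOp m ε φ (t, x)‖ ≤ C * (volume (cellY m)).toReal := by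
      intro x hx
      simp only [channelArray, Set.mem_iUnion] at hx
      obtain ⟨k', hk', w, hw, rfl⟩ := hx
      have hwz : w ∈ cellZ m := hZsSub hw
      have hw1 : ∀ i, w.1 i ∈ Ioo (0:ℝ) 1 := fun i => hwz.1 i (Set.mem_univ i)
      have hdivb : ∀ i, (cellMap ε k' w).1 i / ε = w.1 i + (k' i : ℝ) := by
        intro i
        simp only [cellMap]
        field_simp
      have hsnd : (cellMap ε k' w).2 / ε = w.2 := by
        simp only [cellMap]
        field_simp
      have hfl' : ∀ i, ⌊(cellMap ε k' w).1 i / ε⌋ = k' i := by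
        intro i
        rw [hdivb i, Int.floor_add_intCast,
          Int.floor_eq_zero_iff.mpr ⟨le_of_lt (hw1 i).1, (hw1 i).2⟩, zero_add]
      have hfr' : ∀ i, Int.fract ((cellMap ε k' w).1 i / ε) = w.1 i := by
        intro i
        rw [hdivb i, Int.fract_add_intCast,
          Int.fract_eq_self.mpr ⟨le_of_lt (hw1 i).1, (hw1 i).2⟩]
      have hhead : ∀ zb : Fin m → ℝ,
          ((fun i => ε * (zb i + ((⌊(cellMap ε k' w).1 i / ε⌋ : ℤ) : ℝ))) : Fin m → ℝ)
            = fun i => ε * (zb i + ((k' i : ℤ) : ℝ)) := by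
        intro zb
        funext i
        rw [hfl' i]
      have htail : ((((fun i => Int.fract ((cellMap ε k' w).1 i / ε))) : Fin m → ℝ),
          (cellMap ε k' w).2 / ε) = w := Prod.ext (funext fun i => hfr' i) hsnd
      refine norm_setIntegral_le_of_norm_le_const hcellYvol fun zb hzb => ?_
      rw [hhead zb, htail]
      refine hC _ ⟨rfl, ?_, ?_⟩
      · -- the horizontal midline of the cell lies in `Sig`
        have h0 : ((zb, (0:ℝ)) : Em m) ∈ cellZ m := ⟨hzb, by norm_num⟩
        have h1 := hk' ⟨((zb, (0:ℝ)) : Em m), h0, rfl⟩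
        exact hR h1.1
      · exact ⟨fun i _ => Ioo_subset_Icc_self (hw1 i), Ioo_subset_Icc_self hwz.2⟩
    haveI : IsFiniteMeasure (volume.restrict (channelArray ε Sig Zs)) := by
      constructor
      rw [Measure.restrict_apply_univ]
      have hsub : channelArray ε Sig Zs ⊆ Sig ×ˢ Ioo (-ε) ε := by
        refine Set.iUnion₂_subset fun kv hkv => ?_
        exact (Set.image_mono hZsSub).trans hkv
      exact lt_of_le_of_lt (measure_mono hsub)
        ((hSigBdd.prod (Metric.isBounded_Ioo _ _)).measure_lt_top)
    exact MemLp.of_bound hmeasAvg.aestronglyMeasurable _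
      ((ae_restrict_iff' hArrOpen.measurableSet).mpr (ae_of_all _ hbd))
  intro k hk y hy
  -- the (t,k)-integrand family and its fiberwise derivative
  set c : (Fin m → ℝ) → Fin m → ℝ := fun zb i => ε * (zb i + (k i : ℝ)) with hc
  set F : Em m → (Fin m → ℝ) → ℝ := fun w zb => φ (t, c zb, w) with hF
  set F' : Em m → (Fin m → ℝ) → (Em m →L[ℝ] ℝ) :=
    fun w zb => fderiv ℝ (fun y' => φ (t, c zb, y')) w with hF'
  have hccont : ∀ w : Em m, Continuous fun zb => F w zb := by
    intro w
    simp only [hF, hc]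
    fun_prop
  have hM0 : 0 ≤ M := by
    have h := hφbd t (fun _ => 0) y ((0 : Fin m → ℝ), (1:ℝ))
    have hn : ‖((0 : Fin m → ℝ), (1:ℝ))‖ = 1 := by
      simp [Prod.norm_def]
    rw [hn, mul_one] at h
    exact le_trans (norm_nonneg _) h
  have hop : ∀ (w : Em m) (zb : Fin m → ℝ), ‖F' w zb‖ ≤ M := by
    intro w zb
    exact ContinuousLinearMap.opNorm_le_bound _ hM0 fun wv => hφbd t (c zb) w wv
  -- differentiability ball inside Zs
  obtain ⟨δ, hδ0, hball⟩ := Metric.isOpen_iff.mp hZsOpen y hy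
  -- derivative of the parametrized integral
  have hFint : Integrable (F y) (volume.restrict (cellY m)) := by
    refine (ContinuousOn.integrableOn_compact
      (isCompact_univ_pi fun _ : Fin m => isCompact_Icc) (hccont y).continuousOn).mono_set
      (fun x hx i _ => Ioo_subset_Icc_self (hx i (Set.mem_univ i)))
  have hF'meas : AEStronglyMeasurable (F' y) (volume.restrict (cellY m)) := by
    refine (stronglyMeasurable_fderiv_param (fun zb y' => φ (t, c zb, y')) y ?_
      (fun zb => hφdiff t (c zb) y hy)).aestronglyMeasurable
    simp only [hc]
    fun_prop
  have hΦ : HasFDerivAt (fun w => ∫ zb, F w zb ∂(volume.restrict (cellY m)))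
      (∫ zb, F' y zb ∂(volume.restrict (cellY m))) y := by
    refine hasFDerivAt_integral_of_dominated_of_fderiv_le (F := F) (F' := F') (bound := fun _ => M)
      (Metric.ball_mem_nhds y hδ0) (Eventually.of_forall fun w => (hccont w).aestronglyMeasurable) hFint hF'meas
      (ae_of_all _ fun zb w _ => hop w zb) (integrable_const M)
      (ae_of_all _ fun zb w hw => ?_)
    exact (hφdiff t (c zb) w (hball hw)).hasFDerivAt
  -- the affine change of variables
  set x₀ : Em m := cellMap ε k y with hx₀
  set A : Em m → Em m := fun x => (((fun i => x.1 i / ε - (k i : ℝ)) : Fin m → ℝ), x.2 / ε)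
    with hA
  have hAx₀ : A x₀ = y := by
    refine Prod.ext (funext fun i => ?_) ?_
    · simp only [hA, hx₀, cellMap]
      field_simp
      ring
    · simp only [hA, hx₀, cellMap]
      field_simp
  set L : Em m →L[ℝ] Em m := ε⁻¹ • ContinuousLinearMap.id ℝ (Em m) with hL
  have hAder : HasFDerivAt A L x₀ := by
    have hAeq : A = fun x : Em m => ε⁻¹ • x - (((fun i => (k i : ℝ)) : Fin m → ℝ), (0:ℝ)) := by
      funext x
      refine Prod.ext (funext fun i => ?_) ?_
      · simp [hA, Prod.smul_fst, div_eq_inv_mul]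
      · simp [hA, Prod.smul_snd, div_eq_inv_mul]
    rw [hAeq]
    simpa using ((hasFDerivAt_id x₀).const_smul ε⁻¹).sub_const
      ((((fun i => (k i : ℝ)) : Fin m → ℝ), (0:ℝ)) : Em m)
  have hΦA : HasFDerivAt (fun x => ∫ zb, F (A x) zb ∂(volume.restrict (cellY m)))
      ((∫ zb, F' y zb ∂(volume.restrict (cellY m))).comp L) x₀ := by
    have hΦ' : HasFDerivAt (fun w => ∫ zb, F w zb ∂(volume.restrict (cellY m)))
        (∫ zb, F' y zb ∂(volume.restrict (cellY m))) (A x₀) := by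
      rw [hAx₀]
      exact hΦ
    exact hΦ'.comp x₀ hAder
  -- locally, the averaging operator coincides with the composed integral
  have hyz : y ∈ cellZ m := hZsSub hy
  have hEvEq : (fun x => avgOp m ε φ (t, x))
      =ᶠ[nhds x₀] fun x => ∫ zb, F (A x) zb ∂(volume.restrict (cellY m)) := by
    have hUopen : IsOpen {x : Em m | ∀ i, x.1 i / ε ∈ Ioo ((k i : ℝ)) ((k i : ℝ) + 1)} := by
      rw [Set.setOf_forall]
      refine isOpen_iInter_of_finite fun i => ?_
      exact isOpen_Ioo.preimage (by fun_prop)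
    have hx₀U : x₀ ∈ {x : Em m | ∀ i, x.1 i / ε ∈ Ioo ((k i : ℝ)) ((k i : ℝ) + 1)} := by
      intro i
      have h1 : x₀.1 i / ε = y.1 i + (k i : ℝ) := by
        simp only [hx₀, cellMap]
        field_simp
      have h2 : y.1 i ∈ Ioo (0:ℝ) 1 := hyz.1 i (Set.mem_univ i)
      rw [h1]
      exact ⟨by linarith [h2.1], by linarith [h2.2]⟩
    refine Filter.eventuallyEq_of_mem (hUopen.mem_nhds hx₀U) fun x hx => ?_
    have hfl : ∀ i, ⌊x.1 i / ε⌋ = k i := by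
      intro i
      have := hx i
      exact Int.floor_eq_iff.mpr ⟨le_of_lt this.1, by exact_mod_cast this.2⟩
    have hfr : ∀ i, Int.fract (x.1 i / ε) = x.1 i / ε - (k i : ℝ) := by
      intro i
      rw [← Int.self_sub_floor, hfl i]
    simp only [avgOp, hF, hA, hc]
    refine setIntegral_congr_fun hcellYm fun zb _ => ?_
    simp only [hfl, hfr]
  have hDeriv : HasFDerivAt (fun x => avgOp m ε φ (t, x))
      ((∫ zb, F' y zb ∂(volume.restrict (cellY m))).comp L) x₀ :=
    hΦA.congr_of_eventuallyEq hEvEq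
  refine ⟨hDeriv.differentiableAt, hmem, fun wv => ?_⟩
  rw [hDeriv.fderiv]
  have hF'int : Integrable (F' y) (volume.restrict (cellY m)) :=
    ⟨hF'meas, HasFiniteIntegral.of_bounded (C := M) (ae_of_all _ fun zb => hop y zb)⟩
  have happ : ((∫ zb, F' y zb ∂(volume.restrict (cellY m))).comp L) wv
      = ε⁻¹ • ((∫ zb, F' y zb ∂(volume.restrict (cellY m))) wv) := by
    rw [ContinuousLinearMap.comp_apply]
    simp only [hL, ContinuousLinearMap.smul_apply, ContinuousLinearMap.id_apply]
    exact ((∫ zb, F' y zb ∂(volume.restrict (cellY m)))).map_smul ε⁻¹ wv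
  rw [happ, ContinuousLinearMap.integral_apply hF'int wv]
  rw [smul_eq_mul, ← mul_assoc, mul_inv_cancel₀ hεne, one_mul]
end
end

section
/- For all $\phi_\epsilon\in L^2((0,T)\times\Omega^M_{*,\epsilon})$ (extended by zero), all $0<h\ll1$, and all $\bar\xi\in\mathbb{R}^{n-1}$ with $|\bar\xi|\ll h$, it holds for $\epsilon$ small enough that $\|\mathcal{T}_\epsilon\phi_\epsilon(\cdot,\cdot+\bar\xi,\cdot)-\mathcal{T}_\epsilon\phi_\epsilon\|^2_{L^2((0,T)\times\Sigma_{2h}\times Z)}\le\frac{1}{\epsilon}\sum_{\bar j\in\{0,1\}^{n-1}}\|\delta_l\phi_\epsilon\|^2_{L^2((0,T)\times\widehat\Omega^M_{*,\epsilon,h})}$, where $l=l(\epsilon,\bar\xi,\bar j)=\bar j+[\bar\xi/\epsilon]\in\mathbb{Z}^{n-1}$ (identified with $(l,0)\in\mathbb{Z}^n$). -/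
open MeasureTheory Set ENNReal Filter

noncomputable section

/-- `Σ_h = {x̄ ∈ Σ : dist(∂Σ, x̄) > h}`. -/
def sigmaInner {m : ℕ} (Sig : Set (Fin m → ℝ)) (h : ℝ) : Set (Fin m → ℝ) :=
  {xb ∈ Sig | ENNReal.ofReal h < EMetric.infEdist xb Sigᶜ}

/-- The interior channel array `Ω̂^M_{*,ε,h}`, union of the full channel cells whose
base cell is contained in `Σ_h`. -/
def hatChannel {m : ℕ} (ε : ℝ) (Sig : Set (Fin m → ℝ)) (Zs : Set (Em m)) (h : ℝ) :
    Set (Em m) :=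
  channelArray ε (sigmaInner Sig h) Zs

/-- Discrete shift difference `δ_l φ(t,x) = φ(t, x + ε(l,0)) - φ(t,x)`. -/
def shiftDiff {m : ℕ} (ε : ℝ) (l : Fin m → ℤ) (φ : ℝ × Em m → ℝ) : ℝ × Em m → ℝ :=
  fun x => φ (x.1, ((fun i => x.2.1 i + ε * (l i : ℝ)), x.2.2)) - φ x
namespace ShiftAux9

variable {m : ℕ}

instance (m : ℕ) : (volume : Measure (Em m)).IsAddHaarMeasure :=
  Measure.prod.instIsAddHaarMeasure _ _

lemma finrank_Em (m : ℕ) : Module.finrank ℝ (Em m) = m + 1 := by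
  simp [Module.finrank_prod]

lemma isOpen_cellZ (m : ℕ) : IsOpen (cellZ m) :=
  ((isOpen_set_pi finite_univ (fun _ _ => isOpen_Ioo))).prod isOpen_Ioo

lemma measurableSet_cellZ (m : ℕ) : MeasurableSet (cellZ m) :=
  (isOpen_cellZ m).measurableSet

lemma measurable_cellMap (ε : ℝ) (k : Fin m → ℤ) : Measurable (cellMap ε k) := by
  apply Measurable.prod
  · exact measurable_pi_lambda _ fun i => by
      simp only [cellMap]; fun_prop
  · exact measurable_snd.const_mul ε

lemma measurable_floorVec (ε : ℝ) : Measurable (floorVec (m := m) ε) :=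
  measurable_pi_lambda _ fun i =>
    Int.measurable_floor.comp (by fun_prop)

lemma measurable_unfoldPt (ε : ℝ) :
    Measurable (fun p : (Fin m → ℝ) × Em m => cellMap ε (floorVec ε p.1) p.2) := by
  apply Measurable.prod
  · refine measurable_pi_lambda _ fun i => ?_
    refine Measurable.const_mul ?_ ε
    refine Measurable.add ?_ ?_
    · exact (measurable_pi_apply i).comp (measurable_fst.comp measurable_snd)
    · refine Measurable.comp ?_
        (Int.measurable_floor.comp (by fun_prop))
      exact fun _ _ => trivial
  · exact (measurable_snd.comp measurable_snd).const_mul ε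

lemma floor_cellMap {ε : ℝ} (hε : 0 < ε) (k : Fin m → ℤ) {y : Em m} (hy : y ∈ cellZ m) :
    floorVec ε (cellMap ε k y).1 = k := by
  funext i
  have h1 : y.1 i ∈ Ioo (0:ℝ) 1 := hy.1 i (mem_univ i)
  show ⌊ε * (y.1 i + (k i : ℝ)) / ε⌋ = k i
  rw [mul_div_cancel_left₀ _ hε.ne', Int.floor_add_intCast, Int.floor_eq_zero_iff.2
    ⟨h1.1.le, h1.2⟩, zero_add]

lemma mem_cell_unique {ε : ℝ} (hε : 0 < ε) {k k' : Fin m → ℤ} {x : Em m}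
    (h : x ∈ cellMap ε k '' cellZ m) (h' : x ∈ cellMap ε k' '' cellZ m) : k = k' := by
  obtain ⟨y, hy, rfl⟩ := h
  obtain ⟨y', hy', he⟩ := h'
  rw [← floor_cellMap hε k hy, ← he, floor_cellMap hε k' hy']

lemma cellMap_injective {ε : ℝ} (hε : ε ≠ 0) (k : Fin m → ℤ) :
    Function.Injective (cellMap ε k) := by
  intro a b hab
  obtain ⟨h1, h2⟩ := Prod.ext_iff.1 hab
  refine Prod.ext (funext fun i => ?_) ?_
  · have := congrFun h1 i
    simp only [cellMap] at this
    have := mul_left_cancel₀ hε this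
    linarith
  · simp only [cellMap] at h2
    exact mul_left_cancel₀ hε h2

def invMap (ε : ℝ) (k : Fin m → ℤ) (x : Em m) : Em m :=
  ((fun i => x.1 i / ε - (k i : ℝ)), x.2 / ε)

lemma measurable_invMap (ε : ℝ) (k : Fin m → ℤ) : Measurable (invMap (m := m) ε k) := by
  apply Measurable.prod
  · exact measurable_pi_lambda _ fun i => by
      simp only [invMap]; fun_prop
  · exact measurable_snd.div_const ε

lemma invMap_cellMap {ε : ℝ} (hε : ε ≠ 0) (k : Fin m → ℤ) (y : Em m) :
    invMap ε k (cellMap ε k y) = y := by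
  refine Prod.ext (funext fun i => ?_) ?_
  · show ε * (y.1 i + (k i : ℝ)) / ε - (k i : ℝ) = y.1 i
    rw [mul_div_cancel_left₀ _ hε]; ring
  · exact mul_div_cancel_left₀ _ hε

lemma cellMap_invMap {ε : ℝ} (hε : ε ≠ 0) (k : Fin m → ℤ) (x : Em m) :
    cellMap ε k (invMap ε k x) = x := by
  refine Prod.ext (funext fun i => ?_) ?_
  · show ε * (x.1 i / ε - (k i : ℝ) + (k i : ℝ)) = x.1 i
    field_simp
    ring
  · show ε * (x.2 / ε) = x.2
    field_simp

lemma cellMap_image_eq {ε : ℝ} (hε : ε ≠ 0) (k : Fin m → ℤ) (s : Set (Em m)) :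
    cellMap ε k '' s = invMap ε k ⁻¹' s :=
  congrFun (Set.image_eq_preimage_of_inverse (invMap_cellMap hε k) (cellMap_invMap hε k)) s

lemma measurableSet_cellMap_image {ε : ℝ} (hε : ε ≠ 0) (k : Fin m → ℤ) {s : Set (Em m)}
    (hs : MeasurableSet s) : MeasurableSet (cellMap ε k '' s) := by
  rw [cellMap_image_eq hε k]
  exact measurable_invMap ε k hs

lemma map_cellMap_volume {ε : ℝ} (hε : 0 < ε) (k : Fin m → ℤ) :
    Measure.map (cellMap ε k) (volume : Measure (Em m))
      = (ENNReal.ofReal ε ^ (m + 1))⁻¹ • volume := by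
  have hfun : cellMap (m := m) ε k
      = (fun x : Em m => ((fun i => ε * (k i : ℝ), (0:ℝ)) : Em m) + x) ∘ (ε • ·) := by
    funext y
    refine Prod.ext (funext fun i => ?_) ?_
    · show ε * (y.1 i + (k i : ℝ)) = ε * (k i : ℝ) + ε * y.1 i
      ring
    · show ε * y.2 = 0 + ε * y.2
      ring
  rw [hfun, ← Measure.map_map (measurable_const_add _) (measurable_const_smul ε),
    Measure.map_addHaar_smul volume hε.ne', Measure.map_smul,
    MeasureTheory.map_add_left_eq_self volume _]
  congr 1
  rw [finrank_Em, abs_of_pos (inv_pos.2 (pow_pos hε _)),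
    ENNReal.ofReal_inv_of_pos (pow_pos hε _), ENNReal.ofReal_pow hε.le]

lemma setLIntegral_cellMap {ε : ℝ} (hε : 0 < ε) (k : Fin m → ℤ) {s : Set (Em m)}
    (hs : MeasurableSet s) {F : Em m → ℝ≥0∞} (hF : Measurable F) :
    ∫⁻ y in s, F (cellMap ε k y)
      = (ENNReal.ofReal ε ^ (m + 1))⁻¹ * ∫⁻ x in cellMap ε k '' s, F x := by
  have himg : MeasurableSet (cellMap ε k '' s) := measurableSet_cellMap_image hε.ne' k hs
  have h1 := setLIntegral_map (μ := (volume : Measure (Em m))) himg hF (measurable_cellMap ε k)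
  rw [map_cellMap_volume hε, Measure.restrict_smul, lintegral_smul_measure,
    Set.preimage_image_eq s (cellMap_injective hε.ne' k)] at h1
  rw [← h1, smul_eq_mul]

lemma floor_add_cases (a b : ℝ) : ⌊a + b⌋ = ⌊a⌋ + ⌊b⌋ ∨ ⌊a + b⌋ = ⌊a⌋ + ⌊b⌋ + 1 := by
  have h1 : ⌊a⌋ + ⌊b⌋ ≤ ⌊a + b⌋ := by
    apply Int.le_floor.2
    push_cast
    exact add_le_add (Int.floor_le a) (Int.floor_le b)
  have h2 : ⌊a + b⌋ < ⌊a⌋ + ⌊b⌋ + 2 := by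
    apply Int.floor_lt.2
    push_cast
    have := Int.lt_floor_add_one a
    have := Int.lt_floor_add_one b
    linarith
  omega


lemma shiftPt_eq {ε : ℝ} (k l : Fin m → ℤ) (y : Em m) :
    (((fun i => (cellMap ε k y).1 i + ε * ((l i : ℤ) : ℝ)), (cellMap ε k y).2) : Em m)
      = cellMap ε (fun i => k i + l i) y := by
  refine Prod.ext (funext fun i => ?_) rfl
  show ε * (y.1 i + (k i : ℝ)) + ε * (l i : ℝ) = ε * (y.1 i + ((k i + l i : ℤ) : ℝ))
  push_cast
  ring

lemma notMem_channel {ε : ℝ} (hε : 0 < ε) {Sig : Set (Fin m → ℝ)} {Zs : Set (Em m)}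
    (hZsSub : Zs ⊆ cellZ m) (k : Fin m → ℤ) {y : Em m} (hy : y ∈ cellZ m) (hyn : y ∉ Zs) :
    cellMap ε k y ∉ channelArray ε Sig Zs := by
  intro hmem
  obtain ⟨k'', hk'', hx⟩ : ∃ k'' ∈ cellIdx ε Sig, cellMap ε k y ∈ cellMap ε k'' '' Zs := by
    simpa [channelArray, mem_iUnion] using hmem
  have h1 : cellMap ε k y ∈ cellMap ε k '' cellZ m := mem_image_of_mem _ hy
  have h2 : cellMap ε k y ∈ cellMap ε k'' '' cellZ m :=
    Set.image_mono hZsSub hx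
  have hkk : k = k'' := mem_cell_unique hε h1 h2
  subst hkk
  obtain ⟨y', hy', he⟩ := hx
  exact hyn ((cellMap_injective hε.ne' k he) ▸ hy')

lemma shiftDiff_vanish {ε T : ℝ} (hε : 0 < ε) {Sig : Set (Fin m → ℝ)} {Zs : Set (Em m)}
    (hZsSub : Zs ⊆ cellZ m) {φ : ℝ × Em m → ℝ}
    (hφ0 : ∀ x, x ∉ (Ioo (0:ℝ) T) ×ˢ channelArray ε Sig Zs → φ x = 0)
    (l k : Fin m → ℤ) {y : Em m} (hy : y ∈ cellZ m) (hyn : y ∉ Zs) (t : ℝ) :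
    shiftDiff ε l φ (t, cellMap ε k y) = 0 := by
  have e1 : φ (t, cellMap ε k y) = 0 :=
    hφ0 _ (fun hc => notMem_channel hε hZsSub k hy hyn hc.2)
  have e2 : φ (t, ((fun i => (cellMap ε k y).1 i + ε * ((l i : ℤ) : ℝ)),
      (cellMap ε k y).2)) = 0 := by
    rw [shiftPt_eq k l y]
    exact hφ0 _ (fun hc => notMem_channel hε hZsSub (fun i => k i + l i) hy hyn hc.2)
  show φ _ - φ _ = 0
  rw [e1, e2, sub_zero]

lemma floorVec_mem_Ico {ε : ℝ} (hε : 0 < ε) {x : Fin m → ℝ} {k : Fin m → ℤ}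
    (hk : floorVec ε x = k) (i : Fin m) :
    ε * (k i : ℝ) ≤ x i ∧ x i < ε * (k i : ℝ) + ε := by
  have h1 : ⌊x i / ε⌋ = k i := congrFun hk i
  have h2 := Int.floor_le (x i / ε)
  have h3 := Int.lt_floor_add_one (x i / ε)
  rw [h1] at h2 h3
  constructor
  · have := (le_div_iff₀ hε).1 h2
    linarith
  · have := (div_lt_iff₀ hε).1 h3
    push_cast at this
    linarith

lemma cell_in_sigmaInner {ε h : ℝ} {Sig : Set (Fin m → ℝ)}
    (hh : 0 < h) (hε : 0 < ε) (hεh : ε ≤ h)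
    {x : Fin m → ℝ} (hx : x ∈ sigmaInner Sig (2*h)) {k : Fin m → ℤ}
    (hk : floorVec ε x = k) :
    k ∈ cellIdx ε (sigmaInner Sig h) := by
  rintro _ ⟨y, hy, rfl⟩
  obtain ⟨hxSig, hxd⟩ := hx
  constructor
  · -- first component in sigmaInner Sig h
    have hdist : dist (cellMap ε k y).1 x ≤ ε := by
      rw [dist_pi_le_iff hε.le]
      intro i
      have hxi := floorVec_mem_Ico hε hk i
      have hyi : y.1 i ∈ Ioo (0:ℝ) 1 := hy.1 i (mem_univ i)
      have hz1 : ε * (k i : ℝ) ≤ ε * (y.1 i + (k i : ℝ)) := by nlinarith [hyi.1]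
      have hz2 : ε * (y.1 i + (k i : ℝ)) ≤ ε * (k i : ℝ) + ε := by nlinarith [hyi.2]
      rw [Real.dist_eq, abs_le]
      constructor
      · show -ε ≤ ε * (y.1 i + (k i : ℝ)) - x i
        have := hxi.2
        linarith
      · show ε * (y.1 i + (k i : ℝ)) - x i ≤ ε
        have := hxi.1
        linarith
    have hzd : ENNReal.ofReal h < EMetric.infEdist (cellMap ε k y).1 Sigᶜ := by
      by_contra hle
      push_neg at hle
      have h3 : EMetric.infEdist x Sigᶜ
          ≤ EMetric.infEdist (cellMap ε k y).1 Sigᶜ + edist x (cellMap ε k y).1 :=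
        EMetric.infEdist_le_infEdist_add_edist
      have h4 : edist x (cellMap ε k y).1 ≤ ENNReal.ofReal ε := by
        rw [edist_dist]
        exact ENNReal.ofReal_le_ofReal (by rw [dist_comm]; exact hdist)
      have h5 : EMetric.infEdist x Sigᶜ ≤ ENNReal.ofReal h + ENNReal.ofReal ε :=
        le_trans h3 (add_le_add hle h4)
      rw [← ENNReal.ofReal_add hh.le hε.le] at h5
      have h6 : EMetric.infEdist x Sigᶜ ≤ ENNReal.ofReal (2*h) :=
        le_trans h5 (ENNReal.ofReal_le_ofReal (by linarith))
      exact absurd hxd (not_lt.2 h6)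
    have hzSig : (cellMap ε k y).1 ∈ Sig := by
      by_contra hns
      have h0 : EMetric.infEdist (cellMap ε k y).1 Sigᶜ = 0 :=
        EMetric.infEdist_zero_of_mem hns
      rw [h0] at hzd
      simp at hzd
    exact ⟨hzSig, hzd⟩
  · -- second component in Ioo (-ε) ε
    have h2 := hy.2
    constructor
    · show -ε < ε * y.2
      nlinarith [h2.1, h2.2]
    · show ε * y.2 < ε
      nlinarith [h2.2]

lemma Ck_eq {ε : ℝ} (hε : 0 < ε) (k : Fin m → ℤ) :
    {x : Fin m → ℝ | floorVec ε x = k}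
      = Set.pi univ (fun i => Ico (ε * (k i : ℝ)) (ε * (k i : ℝ) + ε)) := by
  ext x
  simp only [mem_setOf_eq, Set.mem_pi, mem_univ, true_implies, mem_Ico, funext_iff, floorVec]
  refine forall_congr' fun i => ?_
  rw [Int.floor_eq_iff]
  constructor
  · rintro ⟨h1, h2⟩
    constructor
    · have := (le_div_iff₀ hε).1 h1
      linarith
    · have := (div_lt_iff₀ hε).1 h2
      push_cast at this
      linarith
  · rintro ⟨h1, h2⟩
    constructor
    · rw [le_div_iff₀ hε]
      linarith
    · rw [div_lt_iff₀ hε]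
      push_cast
      linarith

lemma volume_Ck {ε : ℝ} (hε : 0 < ε) (k : Fin m → ℤ) :
    volume {x : Fin m → ℝ | floorVec ε x = k} = ENNReal.ofReal ε ^ m := by
  rw [Ck_eq hε k, volume_pi_pi]
  simp only [Real.volume_Ico, add_sub_cancel_left]
  rw [Finset.prod_const, Finset.card_univ, Fintype.card_fin]

lemma measurableSet_Ck (ε : ℝ) (k : Fin m → ℤ) :
    MeasurableSet {x : Fin m → ℝ | floorVec ε x = k} := by
  have : {x : Fin m → ℝ | floorVec ε x = k} = floorVec ε ⁻¹' {k} := rfl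
  rw [this]
  exact measurable_floorVec ε (measurableSet_singleton k)

lemma measurableSet_sigmaInner {Sig : Set (Fin m → ℝ)} (hSig : MeasurableSet Sig) (c : ℝ) :
    MeasurableSet (sigmaInner Sig c) := by
  have : sigmaInner Sig c
      = Sig ∩ (fun x => EMetric.infEdist x Sigᶜ) ⁻¹' (Ioi (ENNReal.ofReal c)) := rfl
  rw [this]
  exact hSig.inter (EMetric.continuous_infEdist.measurable measurableSet_Ioi)


lemma pow_inv_mul_pow {a : ℝ≥0∞} (ha0 : a ≠ 0) (haT : a ≠ ⊤) (m : ℕ) :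
    (a ^ (m + 1))⁻¹ * a ^ m = a⁻¹ := by
  rw [pow_succ, ENNReal.mul_inv (Or.inl (pow_ne_zero m ha0)) (Or.inr ha0)]
  rw [mul_comm (a ^ m)⁻¹ a⁻¹, mul_assoc,
    ENNReal.inv_mul_cancel (pow_ne_zero m ha0) (ENNReal.pow_ne_top haT), mul_one]

lemma inner_est {ε h : ℝ} (hε : 0 < ε) (hεh : ε ≤ h) (hh : 0 < h)
    {Sig : Set (Fin m → ℝ)} (hSig : MeasurableSet Sig)
    {Zs : Set (Em m)} (hZsOpen : IsOpen Zs) (hZsSub : Zs ⊆ cellZ m)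
    {F : Em m → ℝ≥0∞} (hF : Measurable F)
    (hF0 : ∀ (k : Fin m → ℤ) (y : Em m), y ∈ cellZ m → y ∉ Zs → F (cellMap ε k y) = 0) :
    ∫⁻ p in (sigmaInner Sig (2*h)) ×ˢ cellZ m, F (cellMap ε (floorVec ε p.1) p.2)
      ≤ (ENNReal.ofReal ε)⁻¹ * ∫⁻ x in hatChannel ε Sig Zs h, F x := by
  classical
  set a := ENNReal.ofReal ε with ha_def
  have ha0 : a ≠ 0 := by simp [ha_def, ENNReal.ofReal_eq_zero, not_le, hε]
  have haT : a ≠ ⊤ := ENNReal.ofReal_ne_top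
  set A := sigmaInner Sig (2*h) with hA_def
  have hAmeas : MeasurableSet A := measurableSet_sigmaInner hSig (2*h)
  set Ck : (Fin m → ℤ) → Set (Fin m → ℝ) := fun k => {x | floorVec ε x = k} with hCk_def
  have hCkm : ∀ k, MeasurableSet (Ck k) := fun k => measurableSet_Ck ε k
  set idx := cellIdx ε (sigmaInner Sig h) with hidx_def
  -- split the domain into cells
  have hsplit : A ×ˢ cellZ m = ⋃ k : Fin m → ℤ, ((A ∩ Ck k) ×ˢ cellZ m) := by
    ext p
    simp only [mem_iUnion, mem_prod, mem_inter_iff]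
    constructor
    · rintro ⟨h1, h2⟩
      exact ⟨floorVec ε p.1, ⟨h1, rfl⟩, h2⟩
    · rintro ⟨k, ⟨h1, _⟩, h2⟩
      exact ⟨h1, h2⟩
  have hdisj : Pairwise (Function.onFun Disjoint (fun k : Fin m → ℤ =>
      ((A ∩ Ck k) ×ˢ cellZ m : Set ((Fin m → ℝ) × Em m)))) := by
    intro k k' hkk'
    refine Set.disjoint_left.2 ?_
    rintro ⟨x, y⟩ ⟨⟨_, hx⟩, _⟩ ⟨⟨_, hx'⟩, _⟩
    exact hkk' (hx ▸ hx')
  have hmeask : ∀ k, MeasurableSet (((A ∩ Ck k) ×ˢ cellZ m : Set ((Fin m → ℝ) × Em m))) :=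
    fun k => (hAmeas.inter (hCkm k)).prod (measurableSet_cellZ m)
  rw [hsplit, lintegral_iUnion hmeask hdisj]
  -- per-cell bound
  have perk : ∀ k : Fin m → ℤ,
      ∫⁻ p in (A ∩ Ck k) ×ˢ cellZ m, F (cellMap ε (floorVec ε p.1) p.2)
        ≤ (if k ∈ idx then a⁻¹ * ∫⁻ x in cellMap ε k '' Zs, F x else 0) := by
    intro k
    have hmeasF : Measurable fun p : (Fin m → ℝ) × Em m => F (cellMap ε k p.2) :=
      hF.comp ((measurable_cellMap ε k).comp measurable_snd)
    have hcongr : ∫⁻ p in (A ∩ Ck k) ×ˢ cellZ m, F (cellMap ε (floorVec ε p.1) p.2)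
        = ∫⁻ p in (A ∩ Ck k) ×ˢ cellZ m, F (cellMap ε k p.2) :=
      setLIntegral_congr_fun (hmeask k)
        (fun p hp => by rw [hp.1.2])
    rw [hcongr, Measure.volume_eq_prod, ← Measure.prod_restrict,
      lintegral_prod _ hmeasF.aemeasurable]
    simp only
    rw [lintegral_const, Measure.restrict_apply_univ]
    by_cases hne : (A ∩ Ck k).Nonempty
    · obtain ⟨x, hxA, hxC⟩ := hne
      have hkidx : k ∈ idx := cell_in_sigmaInner hh hε hεh hxA hxC
      rw [if_pos hkidx]
      have hb1 : volume (A ∩ Ck k) ≤ a ^ m := by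
        calc volume (A ∩ Ck k) ≤ volume (Ck k) := measure_mono inter_subset_right
        _ = a ^ m := volume_Ck hε k
      have hb2 : (∫⁻ y in cellZ m, F (cellMap ε k y))
          ≤ (a ^ (m + 1))⁻¹ * ∫⁻ x in cellMap ε k '' Zs, F x := by
        have hsub : cellZ m ⊆ Zs ∪ (cellZ m \ Zs) := fun z hz => by
          by_cases hzZ : z ∈ Zs
          · exact Or.inl hzZ
          · exact Or.inr ⟨hz, hzZ⟩
        calc (∫⁻ y in cellZ m, F (cellMap ε k y))
            ≤ ∫⁻ y in Zs ∪ (cellZ m \ Zs), F (cellMap ε k y) :=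
              lintegral_mono_set hsub
          _ ≤ (∫⁻ y in Zs, F (cellMap ε k y))
              + ∫⁻ y in cellZ m \ Zs, F (cellMap ε k y) := lintegral_union_le _ _ _
          _ = (∫⁻ y in Zs, F (cellMap ε k y)) + 0 := by
              congr 1
              rw [setLIntegral_congr_fun ((measurableSet_cellZ m).diff hZsOpen.measurableSet)
                (fun y hy => hF0 k y hy.1 hy.2)]
              exact lintegral_zero
          _ = (a ^ (m + 1))⁻¹ * ∫⁻ x in cellMap ε k '' Zs, F x := by
              rw [add_zero, setLIntegral_cellMap hε k hZsOpen.measurableSet hF]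
      calc (∫⁻ y in cellZ m, F (cellMap ε k y)) * volume (A ∩ Ck k)
          ≤ ((a ^ (m + 1))⁻¹ * ∫⁻ x in cellMap ε k '' Zs, F x) * a ^ m :=
            mul_le_mul' hb2 hb1
        _ = a⁻¹ * ∫⁻ x in cellMap ε k '' Zs, F x := by
            rw [mul_right_comm, pow_inv_mul_pow ha0 haT m]
    · rw [not_nonempty_iff_eq_empty.1 hne, measure_empty, mul_zero]
      exact zero_le
  refine le_trans (ENNReal.tsum_le_tsum perk) ?_
  -- identify the sum with the integral over the hat channel
  set tset : (Fin m → ℤ) → Set (Em m) :=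
    fun k => if k ∈ idx then cellMap ε k '' Zs else ∅ with htset_def
  have htmeas : ∀ k, MeasurableSet (tset k) := by
    intro k
    by_cases hk : k ∈ idx
    · simp only [htset_def, if_pos hk]
      exact measurableSet_cellMap_image hε.ne' k hZsOpen.measurableSet
    · simp only [htset_def, if_neg hk]
      exact MeasurableSet.empty
  have htsub : ∀ k, tset k ⊆ cellMap ε k '' cellZ m := by
    intro k
    by_cases hk : k ∈ idx
    · simp only [htset_def, if_pos hk]
      exact Set.image_mono hZsSub
    · simp only [htset_def, if_neg hk]
      exact empty_subset _
  have htdisj : Pairwise (Function.onFun Disjoint tset) := by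
    intro k k' hkk'
    refine Set.disjoint_left.2 fun x hx hx' => ?_
    exact hkk' (mem_cell_unique hε (htsub k hx) (htsub k' hx'))
  have hunion : (⋃ k, tset k) = hatChannel ε Sig Zs h := by
    ext x
    simp only [mem_iUnion, hatChannel, channelArray, htset_def]
    constructor
    · rintro ⟨k, hk⟩
      by_cases hki : k ∈ idx
      · rw [if_pos hki] at hk
        exact ⟨k, hki, hk⟩
      · rw [if_neg hki] at hk
        exact absurd hk (notMem_empty x)
    · rintro ⟨k, hki, hk⟩
      exact ⟨k, by rw [if_pos hki]; exact hk⟩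
  calc (∑' k, if k ∈ idx then a⁻¹ * ∫⁻ x in cellMap ε k '' Zs, F x else 0)
      = ∑' k, a⁻¹ * ∫⁻ x in tset k, F x := by
        refine tsum_congr fun k => ?_
        by_cases hk : k ∈ idx
        · rw [if_pos hk]
          simp only [htset_def, if_pos hk]
        · rw [if_neg hk]
          simp only [htset_def, if_neg hk, Measure.restrict_empty, lintegral_zero_measure,
            mul_zero]
    _ = a⁻¹ * ∑' k, ∫⁻ x in tset k, F x := ENNReal.tsum_mul_left
    _ = a⁻¹ * ∫⁻ x in ⋃ k, tset k, F x := by rw [lintegral_iUnion htmeas htdisj]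
    _ ≤ a⁻¹ * ∫⁻ x in hatChannel ε Sig Zs h, F x := by rw [hunion]

end ShiftAux9

/-- shift estimate for the unfolded sequence: for `φ_ε` extended by
zero, `0 < h`, `|ξ̄| < h` and `ε` small enough,
`‖𝒯_ε φ_ε(·,·+ξ̄,·) - 𝒯_ε φ_ε‖²_{L²((0,T)×Σ_{2h}×Z)}
  ≤ (1/ε) ∑_{j̄∈{0,1}^{n-1}} ‖δ_l φ_ε‖²_{L²((0,T)×Ω̂^M_{*,ε,h})}` with
`l = j̄ + [ξ̄/ε]`. -/
theorem shift_estimate_unfolded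
    (m : ℕ) (T : ℝ) (hT : 0 < T)
    (Sig : Set (Fin m → ℝ)) (hSigOpen : IsOpen Sig) (hSigBdd : Bornology.IsBounded Sig)
    (Zs : Set (Em m)) (hZsOpen : IsOpen Zs) (hZsSub : Zs ⊆ cellZ m)
    (h : ℝ) (hh : 0 < h) (ξ : Fin m → ℝ) (hξ : ‖ξ‖ < h) :
    ∃ ε₀ > (0:ℝ), ∀ ε : ℝ, admissibleEps ε → ε < ε₀ →
      ∀ φ : ℝ × Em m → ℝ, Measurable φ →
        (∀ x, x ∉ (Ioo 0 T) ×ˢ channelArray ε Sig Zs → φ x = 0) →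
        (∫⁻ r in (Ioo 0 T) ×ˢ ((sigmaInner Sig (2*h)) ×ˢ cellZ m),
            ENNReal.ofReal ((unfoldOp ε φ (r.1, ((fun i => r.2.1 i + ξ i), r.2.2))
              - unfoldOp ε φ r)^2))
          ≤ ENNReal.ofReal (1/ε) *
              ∑ jb : Fin m → Bool,
                ∫⁻ x in (Ioo 0 T) ×ˢ hatChannel ε Sig Zs h,
                  ENNReal.ofReal
                    ((shiftDiff ε (fun i => (if jb i then 1 else 0) + ⌊ξ i / ε⌋) φ x)^2) := by
  classical
  refine ⟨h, hh, ?_⟩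
  rintro ε ⟨hε, -⟩ hεlt φ hφm hφ0
  have hεh : ε ≤ h := hεlt.le
  set a := ENNReal.ofReal ε with ha_def
  have ha0 : a ≠ 0 := by simp [ha_def, ENNReal.ofReal_eq_zero, not_le, hε]
  set l : (Fin m → Bool) → (Fin m → ℤ) :=
    fun jb i => (if jb i then 1 else 0) + ⌊ξ i / ε⌋ with hl_def
  set ψ : (Fin m → Bool) → ℝ × Em m → ℝ := fun jb => shiftDiff ε (l jb) φ with hψ_def
  have hψm : ∀ jb, Measurable (ψ jb) := by
    intro jb
    refine Measurable.sub ?_ hφm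
    refine hφm.comp ?_
    refine measurable_fst.prodMk
      (Measurable.prodMk ?_ (measurable_snd.comp measurable_snd))
    exact measurable_pi_lambda _ fun i =>
      ((measurable_pi_apply i).comp (measurable_fst.comp measurable_snd)).add measurable_const
  have hUm : ∀ jb, Measurable fun r : ℝ × ((Fin m → ℝ) × Em m) =>
      ψ jb (r.1, cellMap ε (floorVec ε r.2.1) r.2.2) := fun jb =>
    (hψm jb).comp (measurable_fst.prodMk
      ((ShiftAux9.measurable_unfoldPt ε).comp measurable_snd))
  set jbOf : (Fin m → ℝ) → (Fin m → Bool) :=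
    fun x i => decide (⌊(x i + ξ i) / ε⌋ = ⌊x i / ε⌋ + ⌊ξ i / ε⌋ + 1) with hjb_def
  have hpt : ∀ r : ℝ × ((Fin m → ℝ) × Em m),
      unfoldOp ε φ (r.1, ((fun i => r.2.1 i + ξ i), r.2.2)) - unfoldOp ε φ r
        = ψ (jbOf r.2.1) (r.1, cellMap ε (floorVec ε r.2.1) r.2.2) := by
    rintro ⟨t, x, y⟩
    have hfl : (floorVec ε fun i => x i + ξ i)
        = fun i => floorVec ε x i + l (jbOf x) i := by
      funext i
      show ⌊(x i + ξ i) / ε⌋ = ⌊x i / ε⌋ + ((if jbOf x i then 1 else 0) + ⌊ξ i / ε⌋)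
      have hsplit : ⌊(x i + ξ i) / ε⌋ = ⌊x i / ε⌋ + ⌊ξ i / ε⌋
          ∨ ⌊(x i + ξ i) / ε⌋ = ⌊x i / ε⌋ + ⌊ξ i / ε⌋ + 1 := by
        rw [add_div]
        exact ShiftAux9.floor_add_cases _ _
      by_cases hc : ⌊(x i + ξ i) / ε⌋ = ⌊x i / ε⌋ + ⌊ξ i / ε⌋ + 1
      · have hb : jbOf x i = true := by simp [hjb_def, hc]
        rw [hb, if_pos rfl]
        omega
      · have hb : jbOf x i = false := by simp [hjb_def, hc]
        rw [hb]
        rcases hsplit with hs | hs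
        · rw [hs]
          simp
        · exact absurd hs hc
    show φ (t, cellMap ε (floorVec ε fun i => x i + ξ i) y)
          - φ (t, cellMap ε (floorVec ε x) y)
        = φ (t, ((fun i => (cellMap ε (floorVec ε x) y).1 i
              + ε * ((l (jbOf x) i : ℤ) : ℝ)), (cellMap ε (floorVec ε x) y).2))
          - φ (t, cellMap ε (floorVec ε x) y)
    rw [ShiftAux9.shiftPt_eq (floorVec ε x) (l (jbOf x)) y, hfl]
  have hone : ENNReal.ofReal (1/ε) = a⁻¹ := by
    rw [one_div, ha_def, ENNReal.ofReal_inv_of_pos hε]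
  rw [hone]
  have keybound : ∀ jb : Fin m → Bool,
      (∫⁻ r in (Ioo 0 T) ×ˢ ((sigmaInner Sig (2*h)) ×ˢ cellZ m),
        ENNReal.ofReal ((ψ jb (r.1, cellMap ε (floorVec ε r.2.1) r.2.2))^2))
      ≤ a⁻¹ * ∫⁻ x in (Ioo 0 T) ×ˢ hatChannel ε Sig Zs h,
          ENNReal.ofReal ((ψ jb x)^2) := by
    intro jb
    have hGm : Measurable fun r : ℝ × ((Fin m → ℝ) × Em m) =>
        ENNReal.ofReal ((ψ jb (r.1, cellMap ε (floorVec ε r.2.1) r.2.2))^2) :=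
      ENNReal.measurable_ofReal.comp ((hUm jb).pow_const 2)
    have hHm : Measurable fun x : ℝ × Em m => ENNReal.ofReal ((ψ jb x)^2) :=
      ENNReal.measurable_ofReal.comp ((hψm jb).pow_const 2)
    have hinner : ∀ t : ℝ,
        (∫⁻ p in (sigmaInner Sig (2*h)) ×ˢ cellZ m,
          ENNReal.ofReal ((ψ jb (t, cellMap ε (floorVec ε p.1) p.2))^2))
        ≤ a⁻¹ * ∫⁻ x in hatChannel ε Sig Zs h, ENNReal.ofReal ((ψ jb (t, x))^2) := by
      intro t
      refine ShiftAux9.inner_est hε hεh hh hSigOpen.measurableSet hZsOpen hZsSub ?_ ?_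
      · exact ENNReal.measurable_ofReal.comp
          (((hψm jb).comp measurable_prodMk_left).pow_const 2)
      · intro k y hy hyn
        have hz : ψ jb (t, cellMap ε k y) = 0 :=
          ShiftAux9.shiftDiff_vanish hε hZsSub hφ0 (l jb) k hy hyn t
        rw [hz]
        simp
    have eqL : (∫⁻ r in (Ioo 0 T) ×ˢ ((sigmaInner Sig (2*h)) ×ˢ cellZ m),
          ENNReal.ofReal ((ψ jb (r.1, cellMap ε (floorVec ε r.2.1) r.2.2))^2))
        = ∫⁻ t in Ioo (0:ℝ) T, ∫⁻ p in (sigmaInner Sig (2*h)) ×ˢ cellZ m,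
            ENNReal.ofReal ((ψ jb (t, cellMap ε (floorVec ε p.1) p.2))^2) := by
      rw [Measure.volume_eq_prod, ← Measure.prod_restrict,
        lintegral_prod _ hGm.aemeasurable]
    have eqR : (∫⁻ x in (Ioo 0 T) ×ˢ hatChannel ε Sig Zs h,
          ENNReal.ofReal ((ψ jb x)^2))
        = ∫⁻ t in Ioo (0:ℝ) T, ∫⁻ x in hatChannel ε Sig Zs h,
            ENNReal.ofReal ((ψ jb (t, x))^2) := by
      rw [Measure.volume_eq_prod, ← Measure.prod_restrict,
        lintegral_prod _ hHm.aemeasurable]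
    calc (∫⁻ r in (Ioo 0 T) ×ˢ ((sigmaInner Sig (2*h)) ×ˢ cellZ m),
          ENNReal.ofReal ((ψ jb (r.1, cellMap ε (floorVec ε r.2.1) r.2.2))^2))
        = ∫⁻ t in Ioo (0:ℝ) T, ∫⁻ p in (sigmaInner Sig (2*h)) ×ˢ cellZ m,
            ENNReal.ofReal ((ψ jb (t, cellMap ε (floorVec ε p.1) p.2))^2) := eqL
      _ ≤ ∫⁻ t in Ioo (0:ℝ) T, a⁻¹ * ∫⁻ x in hatChannel ε Sig Zs h,
            ENNReal.ofReal ((ψ jb (t, x))^2) := lintegral_mono fun t => hinner t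
      _ = a⁻¹ * ∫⁻ t in Ioo (0:ℝ) T, ∫⁻ x in hatChannel ε Sig Zs h,
            ENNReal.ofReal ((ψ jb (t, x))^2) :=
          lintegral_const_mul' _ _ (ENNReal.inv_ne_top.2 ha0)
      _ = a⁻¹ * ∫⁻ x in (Ioo 0 T) ×ˢ hatChannel ε Sig Zs h,
            ENNReal.ofReal ((ψ jb x)^2) := by rw [eqR]
  calc (∫⁻ r in (Ioo 0 T) ×ˢ ((sigmaInner Sig (2*h)) ×ˢ cellZ m),
        ENNReal.ofReal ((unfoldOp ε φ (r.1, ((fun i => r.2.1 i + ξ i), r.2.2))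
          - unfoldOp ε φ r)^2))
      = ∫⁻ r in (Ioo 0 T) ×ˢ ((sigmaInner Sig (2*h)) ×ˢ cellZ m),
          ENNReal.ofReal ((ψ (jbOf r.2.1) (r.1, cellMap ε (floorVec ε r.2.1) r.2.2))^2) :=
        lintegral_congr fun r => by rw [hpt r]
    _ ≤ ∫⁻ r in (Ioo 0 T) ×ˢ ((sigmaInner Sig (2*h)) ×ˢ cellZ m),
          ∑ jb : Fin m → Bool,
            ENNReal.ofReal ((ψ jb (r.1, cellMap ε (floorVec ε r.2.1) r.2.2))^2) :=
        lintegral_mono fun r => Finset.single_le_sum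
          (f := fun jb => ENNReal.ofReal
            ((ψ jb (r.1, cellMap ε (floorVec ε r.2.1) r.2.2))^2))
          (fun _ _ => zero_le) (Finset.mem_univ _)
    _ = ∑ jb : Fin m → Bool, ∫⁻ r in (Ioo 0 T) ×ˢ ((sigmaInner Sig (2*h)) ×ˢ cellZ m),
          ENNReal.ofReal ((ψ jb (r.1, cellMap ε (floorVec ε r.2.1) r.2.2))^2) :=
        lintegral_finset_sum' _ fun jb _ =>
          (ENNReal.measurable_ofReal.comp ((hUm jb).pow_const 2)).aemeasurable
    _ ≤ ∑ jb : Fin m → Bool, a⁻¹ * ∫⁻ x in (Ioo 0 T) ×ˢ hatChannel ε Sig Zs h,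
          ENNReal.ofReal ((ψ jb x)^2) :=
        Finset.sum_le_sum fun jb _ => keybound jb
    _ = a⁻¹ * ∑ jb : Fin m → Bool, ∫⁻ x in (Ioo 0 T) ×ˢ hatChannel ε Sig Zs h,
          ENNReal.ofReal ((ψ jb x)^2) := (Finset.mul_sum _ _ _).symm
end
end
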